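/- Let G be a non-abelian p-group. Then G has exactly one normal subgroup of index p² if and only if the derived subgroup G' equals the Frattini subgroup Φ(G) and has index p² in G. -/

import Mathlib

open Subgroup
open scoped commutatorElement

section Aux

variable {p : ℕ} {G : Type*} [Group G] [Finite G]

lemma aux_le_frattini {N : Subgroup G} (h : ∀ M : Subgroup G, IsCoatom M → N ≤ M) :
    N ≤ frattini G := by
  unfold frattini Order.radical
  exact le_iInf fun M => le_iInf fun hM => h M hM

lemma aux_coatom_normal [Fact p.Prime] (hG : IsPGroup p G) {M : Subgroup G}
    (hM : IsCoatom M) : M.Normal := by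
  haveI := hG.isNilpotent
  exact NormalizerCondition.normal_of_coatom M normalizerCondition_of_isNilpotent hM

lemma aux_quot_subgroup_eq_top {M : Subgroup G} (hM : IsCoatom M) [M.Normal]
    {K : Subgroup (G ⧸ M)} (hK : K ≠ ⊥) : K = ⊤ := by
  have hsurj : Function.Surjective (QuotientGroup.mk' M) := QuotientGroup.mk'_surjective M
  have hmc := map_comap_eq_self_of_surjective hsurj K
  have hle : M ≤ comap (QuotientGroup.mk' M) K := by
    intro x hx
    have hx1 : (QuotientGroup.mk' M) x = 1 := (QuotientGroup.eq_one_iff x).mpr hx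
    simp only [Subgroup.mem_comap, hx1]
    exact K.one_mem
  have hne : comap (QuotientGroup.mk' M) K ≠ M := by
    intro h
    apply hK
    rw [← hmc, h]
    apply Subgroup.ext
    intro y
    simp only [Subgroup.mem_map, Subgroup.mem_bot]
    constructor
    · rintro ⟨x, hx, rfl⟩
      exact (QuotientGroup.eq_one_iff x).mpr hx
    · rintro rfl
      exact ⟨1, M.one_mem, map_one _⟩
  have htop : comap (QuotientGroup.mk' M) K = ⊤ := hM.2 _ (lt_of_le_of_ne hle (Ne.symm hne))
  rw [← hmc, htop]
  exact Subgroup.map_top_of_surjective _ hsurj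

lemma aux_coatom_index [Fact p.Prime] (hG : IsPGroup p G) {M : Subgroup G}
    (hM : IsCoatom M) : M.index = p := by
  have hp : p.Prime := Fact.out
  haveI := aux_coatom_normal hG hM
  have hQ : IsPGroup p (G ⧸ M) := hG.to_quotient M
  obtain ⟨n, hn⟩ := IsPGroup.iff_card.mp hQ
  obtain ⟨x, -, hxM⟩ := SetLike.exists_of_lt (lt_top_iff_ne_top.mpr hM.1)
  haveI : Nontrivial (G ⧸ M) :=
    ⟨(x : G ⧸ M), 1, by simpa [QuotientGroup.eq_one_iff] using hxM⟩
  have hn0 : n ≠ 0 := by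
    rintro rfl
    exact (Finite.one_lt_card_iff_nontrivial.mpr inferInstance).ne' (by simpa using hn)
  have hdvd : p ∣ Nat.card (G ⧸ M) := hn ▸ dvd_pow_self p hn0
  obtain ⟨z, hz⟩ := exists_prime_orderOf_dvd_card' p hdvd
  have hz1 : z ≠ 1 := by
    intro h
    rw [h, orderOf_one] at hz
    exact hp.one_lt.ne' hz.symm
  have hztop : zpowers z = ⊤ :=
    aux_quot_subgroup_eq_top hM (by simpa [Subgroup.zpowers_eq_bot] using hz1)
  calc M.index = Nat.card (G ⧸ M) := M.index_eq_card
    _ = Nat.card (zpowers z) := by rw [hztop, Subgroup.card_top]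
    _ = orderOf z := Nat.card_zpowers z
    _ = p := hz

lemma aux_inf_index [Fact p.Prime] (hG : IsPGroup p G) {M₁ M₂ : Subgroup G}
    (h1 : IsCoatom M₁) (h2 : IsCoatom M₂) (hne : M₁ ≠ M₂) : (M₁ ⊓ M₂).index = p ^ 2 := by
  have hp : p.Prime := Fact.out
  have hle : (M₁ ⊓ M₂).index ≤ p ^ 2 := by
    calc (M₁ ⊓ M₂).index ≤ M₁.index * M₂.index := index_inf_le
      _ = p ^ 2 := by rw [aux_coatom_index hG h1, aux_coatom_index hG h2, sq]
  obtain ⟨n, hn⟩ := IsPGroup.iff_card.mp hG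
  obtain ⟨j, hj1, hj2⟩ := (Nat.dvd_prime_pow hp).mp (hn ▸ index_dvd_card (M₁ ⊓ M₂))
  have hltM : M₁ ⊓ M₂ < M₁ := by
    refine inf_le_left.lt_of_ne fun h => ?_
    have h12 : M₁ ≤ M₂ := by rw [← h]; exact inf_le_right
    exact h2.1 (h1.2 M₂ (h12.lt_of_ne hne))
  set r := (M₁ ⊓ M₂).relIndex M₁ with hr
  have hrel : r * M₁.index = (M₁ ⊓ M₂).index := relIndex_mul_index inf_le_left
  have hr1 : r ≠ 1 := by
    intro h
    exact hltM.ne (le_antisymm inf_le_left (relIndex_eq_one.mp h))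
  have hr0 : r ≠ 0 := by
    have : ((M₁ ⊓ M₂).subgroupOf M₁).index ≠ 0 := Subgroup.index_ne_zero_of_finite
    exact this
  have hr2 : 2 ≤ r := by omega
  have hgt : p < (M₁ ⊓ M₂).index := by
    rw [← hrel, aux_coatom_index hG h1]
    calc p < 2 * p := by have := hp.two_le; omega
      _ ≤ r * p := Nat.mul_le_mul_right p hr2
  have h2p := hp.two_le
  have hj : 2 ≤ j := by
    by_contra h
    push_neg at h
    interval_cases j
    · rw [hj2, pow_zero] at hgt; omega
    · rw [hj2, pow_one] at hgt; omega
  have : p ^ 2 ≤ (M₁ ⊓ M₂).index := by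
    rw [hj2]
    exact Nat.pow_le_pow_right hp.pos hj
  omega

lemma aux_in_coatom [Fact p.Prime] (hG : IsPGroup p G) {M : Subgroup G} (hM : IsCoatom M) :
    (∀ g : G, g ^ p ∈ M) ∧ (∀ g h : G, ⁅g, h⁆ ∈ M) := by
  haveI := aux_coatom_normal hG hM
  have hcard : Nat.card (G ⧸ M) = p := by
    rw [← M.index_eq_card]; exact aux_coatom_index hG hM
  haveI hcyc : IsCyclic (G ⧸ M) := isCyclic_of_prime_card hcard
  letI : CommGroup (G ⧸ M) := IsCyclic.commGroup
  constructor
  · intro g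
    have h1 : (QuotientGroup.mk' M) (g ^ p) = 1 := by
      rw [map_pow, ← hcard]; exact pow_card_eq_one'
    exact (QuotientGroup.eq_one_iff _).mp h1
  · intro g h
    have h1 : (QuotientGroup.mk' M) ⁅g, h⁆ = 1 := by
      rw [map_commutatorElement, commutatorElement_eq_one_iff_mul_comm]
      exact mul_comm _ _
    exact (QuotientGroup.eq_one_iff _).mp h1

end Aux

theorem stmt4 {p : ℕ} (hp : p.Prime) {G : Type*} [Group G] [Finite G]
    (hG : IsPGroup p G) (hna : ¬ ∀ a b : G, a * b = b * a) :
    (∃! N : Subgroup G, N.Normal ∧ N.index = p ^ 2) ↔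
      (commutator G = frattini G ∧ (commutator G).index = p ^ 2) := by
  haveI := Fact.mk hp
  haveI : Nontrivial G := by
    rcases subsingleton_or_nontrivial G with h | h
    · exact absurd (fun a b => Subsingleton.elim _ _) hna
    · exact h
  constructor
  · rintro ⟨N0, ⟨hN0n, hN0i⟩, huniq⟩
    obtain ⟨M₁, hM₁⟩ : ∃ M : Subgroup G, IsCoatom M := by
      rcases eq_top_or_exists_le_coatom (⊥ : Subgroup G) with h | ⟨M, hM, -⟩
      · exact absurd h bot_ne_top
      · exact ⟨M, hM⟩
    obtain ⟨M₂, hM₂, hMne⟩ : ∃ M : Subgroup G, IsCoatom M ∧ M ≠ M₁ := by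
      by_contra hall
      push_neg at hall
      obtain ⟨x, -, hx⟩ := SetLike.exists_of_lt (lt_top_iff_ne_top.mpr hM₁.1)
      have hxtop : zpowers x = ⊤ := by
        rcases eq_top_or_exists_le_coatom (zpowers x) with h | ⟨M, hM, hle⟩
        · exact h
        · exact absurd (hall M hM ▸ hle (mem_zpowers x)) hx
      haveI : IsCyclic G := ⟨x, fun y => show y ∈ zpowers x by rw [hxtop]; trivial⟩
      letI : CommGroup G := IsCyclic.commGroup
      exact absurd (fun a b => mul_comm a b) hna
    have key : ∀ M M' : Subgroup G, IsCoatom M → IsCoatom M' → M ≠ M' → M ⊓ M' = N0 := by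
      intro M M' hM hM' hne
      haveI := aux_coatom_normal hG hM
      haveI := aux_coatom_normal hG hM'
      exact huniq _ ⟨inferInstance, aux_inf_index hG hM hM' hne⟩
    have hfr : frattini G = N0 := by
      apply le_antisymm
      · rw [← key M₂ M₁ hM₂ hM₁ hMne]
        exact le_inf (frattini_le_coatom hM₂) (frattini_le_coatom hM₁)
      · apply aux_le_frattini
        intro M hM
        by_cases h : M = M₁
        · subst h
          rw [← key M M₂ hM hM₂ (Ne.symm hMne)]
          exact inf_le_left
        · rw [← key M M₁ hM hM₁ h]
          exact inf_le_left
    have hfidx : (frattini G).index = p ^ 2 := by rw [hfr]; exact hN0i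
    have hcle : commutator G ≤ frattini G := by
      apply aux_le_frattini
      intro M hM
      rw [_root_.commutator_def, Subgroup.commutator_le]
      exact fun g _ h _ => (aux_in_coatom hG hM).2 g h
    rcases eq_or_lt_of_le hcle with heq | hlt
    · exact ⟨heq, heq ▸ hfidx⟩
    exfalso
    obtain ⟨x0, hx0Φ, hx0K⟩ := SetLike.exists_of_lt hlt
    have hKsub : (commutator G).subgroupOf (frattini G) ≠ ⊤ := by
      intro h
      exact hx0K ((Subgroup.mem_subgroupOf (H := commutator G)).mp
        (h ▸ mem_top (⟨x0, hx0Φ⟩ : frattini G)))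
    obtain ⟨C, hC, hKC⟩ :=
      (eq_top_or_exists_le_coatom ((commutator G).subgroupOf (frattini G))).resolve_left hKsub
    have hΦp : IsPGroup p (frattini G) := hG.to_subgroup (frattini G)
    have hCidx : C.index = p := aux_coatom_index hΦp hC
    set H := map (frattini G).subtype C with hHdef
    have hKH : commutator G ≤ H := by
      intro k hk
      exact ⟨⟨k, hlt.le hk⟩, hKC (by rwa [Subgroup.mem_subgroupOf]), rfl⟩
    have hHΦ : H ≤ frattini G := map_subtype_le C
    haveI hHn : H.Normal := by
      constructor
      intro n hn g
      have h1 : ⁅g, n⁆ ∈ commutator G :=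
        Subgroup.commutator_mem_commutator (mem_top g) (mem_top n)
      have h2 : g * n * g⁻¹ = ⁅g, n⁆ * n := by group
      rw [h2]
      exact mul_mem (hKH h1) hn
    have hHidx : H.index = p ^ 3 := by
      have hsub : H.subgroupOf (frattini G) = C :=
        comap_map_eq_self_of_injective (frattini G).subtype_injective C
      have h1 : H.relIndex (frattini G) * (frattini G).index = H.index :=
        relIndex_mul_index hHΦ
      rw [show H.relIndex (frattini G) = C.index from congrArg Subgroup.index hsub,
        hCidx, hfidx] at h1
      rw [← h1]
      ring
    have hcardB : Nat.card (G ⧸ H) = p ^ 3 := by rw [← H.index_eq_card]; exact hHidx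
    have hcommB : ∀ a b : G ⧸ H, a * b = b * a := by
      intro a b
      induction a using QuotientGroup.induction_on with | H g =>
      induction b using QuotientGroup.induction_on with | H h =>
      rw [← QuotientGroup.mk_mul, ← QuotientGroup.mk_mul]
      apply QuotientGroup.eq.mpr
      have h2 : (g * h)⁻¹ * (h * g) = ⁅h⁻¹, g⁻¹⁆ := by group
      rw [h2]
      exact hKH (Subgroup.commutator_mem_commutator (mem_top _) (mem_top _))
    letI : CommGroup (G ⧸ H) := { (inferInstance : Group (G ⧸ H)) with mul_comm := hcommB }
    have hsurj : Function.Surjective (QuotientGroup.mk' H) := QuotientGroup.mk'_surjective H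
    set f : (G ⧸ H) →* (G ⧸ H) := powMonoidHom p with hfdef
    set CB := map (QuotientGroup.mk' H) (frattini G) with hCBdef
    have hrange : f.range ≤ CB := by
      rintro - ⟨b, rfl⟩
      induction b using QuotientGroup.induction_on with | H g =>
      have hgp : g ^ p ∈ frattini G := by
        have : zpowers (g ^ p) ≤ frattini G :=
          aux_le_frattini fun M hM => zpowers_le.mpr ((aux_in_coatom hG hM).1 g)
        exact this (mem_zpowers _)
      exact ⟨g ^ p, hgp, by simp [hfdef, powMonoidHom_apply]⟩
    have hker : (QuotientGroup.mk' H).ker ≤ frattini G := by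
      rw [QuotientGroup.ker_mk']; exact hHΦ
    have hCBidx : CB.index = p ^ 2 := by
      rw [hCBdef, Subgroup.index_map_eq (frattini G) hsurj hker]
      exact hfidx
    have hCBcard : Nat.card CB = p := by
      have h1 : Nat.card CB * CB.index = Nat.card (G ⧸ H) := CB.card_mul_index
      rw [hCBidx, hcardB] at h1
      have hp2 : 0 < p ^ 2 := pow_pos hp.pos 2
      have : Nat.card CB * p ^ 2 = p * p ^ 2 := by rw [h1]; ring
      exact Nat.eq_of_mul_eq_mul_right hp2 this
    have hEcard : p ^ 2 ≤ Nat.card f.ker := by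
      have h1 : Nat.card f.ker * f.ker.index = Nat.card (G ⧸ H) := f.ker.card_mul_index
      have h2 : f.ker.index ∣ p := by
        have h3 : f.ker.index = Nat.card f.range :=
          f.ker.index_eq_card.trans
            (Nat.card_congr (QuotientGroup.quotientKerEquivRange f).toEquiv)
        rw [h3, ← hCBcard]
        exact Subgroup.card_dvd_of_le hrange
      rcases (Nat.Prime.eq_one_or_self_of_dvd hp _ h2) with h | h
      · rw [h, mul_one, hcardB] at h1
        calc p ^ 2 ≤ p ^ 3 := Nat.pow_le_pow_right hp.pos (by norm_num)
          _ = Nat.card f.ker := h1.symm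
      · rw [h, hcardB] at h1
        have : Nat.card f.ker * p = p ^ 2 * p := by rw [h1]; ring
        exact le_of_eq (Nat.eq_of_mul_eq_mul_right hp.pos this).symm
    haveI : Nontrivial f.ker := by
      apply Finite.one_lt_card_iff_nontrivial.mp
      have h2 : 1 < p ^ 2 := by nlinarith [hp.two_le]
      omega
    obtain ⟨x, hx1⟩ := exists_ne (1 : f.ker)
    have hxE : (x : G ⧸ H) ∈ f.ker := x.2
    have hxp : (x : G ⧸ H) ^ p = 1 := by
      have h := hxE
      rw [MonoidHom.mem_ker] at h
      exact h
    have hxne : (x : G ⧸ H) ≠ 1 := fun h => hx1 (Subtype.ext h)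
    have hordx : orderOf (x : G ⧸ H) = p := orderOf_eq_prime hxp hxne
    have hzx : Nat.card (zpowers (x : G ⧸ H)) = p := (Nat.card_zpowers _).trans hordx
    have hlt2 : zpowers (x : G ⧸ H) < f.ker := by
      refine (zpowers_le.mpr hxE).lt_of_ne fun h => ?_
      rw [h] at hzx
      have : p < p ^ 2 := by nlinarith [hp.two_le]
      omega
    obtain ⟨y, hyE, hynx⟩ := SetLike.exists_of_lt hlt2
    have hyne : y ≠ 1 := fun h => hynx (h ▸ one_mem _)
    have hyp : y ^ p = 1 := by
      have h := hyE
      rw [MonoidHom.mem_ker] at h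
      exact h
    have hordy : orderOf y = p := orderOf_eq_prime hyp hyne
    have hzy : Nat.card (zpowers y) = p := (Nat.card_zpowers _).trans hordy
    have hindex : ∀ z : G ⧸ H, Nat.card (zpowers z) = p → (zpowers z).index = p ^ 2 := by
      intro z hz
      have h1 : Nat.card (zpowers z) * (zpowers z).index = Nat.card (G ⧸ H) :=
        (zpowers z).card_mul_index
      rw [hz, hcardB] at h1
      have : p * (zpowers z).index = p * p ^ 2 := by rw [h1]; ring
      exact Nat.eq_of_mul_eq_mul_left hp.pos this
    have hNx := huniq (comap (QuotientGroup.mk' H) (zpowers (x : G ⧸ H)))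
      ⟨(Subgroup.normal_of_comm _).comap _, by
        rw [index_comap_of_surjective _ hsurj]; exact hindex _ hzx⟩
    have hNy := huniq (comap (QuotientGroup.mk' H) (zpowers y))
      ⟨(Subgroup.normal_of_comm _).comap _, by
        rw [index_comap_of_surjective _ hsurj]; exact hindex _ hzy⟩
    have hcc : comap (QuotientGroup.mk' H) (zpowers y) =
        comap (QuotientGroup.mk' H) (zpowers (x : G ⧸ H)) := hNy.trans hNx.symm
    have : zpowers y = zpowers (x : G ⧸ H) := comap_injective hsurj hcc
    exact hynx (this ▸ mem_zpowers y)
  · rintro ⟨hce, hci⟩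
    refine ⟨commutator G, ⟨inferInstance, hci⟩, ?_⟩
    rintro N ⟨hNn, hNi⟩
    have hcard : Nat.card (G ⧸ N) = p ^ 2 := by rw [← N.index_eq_card]; exact hNi
    have hcomm := IsPGroup.commutative_of_card_eq_prime_sq hcard
    have hle : commutator G ≤ N := by
      rw [_root_.commutator_def, Subgroup.commutator_le]
      intro g _ h _
      have h1 : (QuotientGroup.mk' N) ⁅g, h⁆ = 1 := by
        rw [map_commutatorElement, commutatorElement_eq_one_iff_mul_comm]
        exact hcomm _ _
      exact (QuotientGroup.eq_one_iff _).mp h1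
    have h1 : (commutator G).relIndex N * N.index = (commutator G).index :=
      relIndex_mul_index hle
    rw [hNi, hci] at h1
    have hp2 : 0 < p ^ 2 := pow_pos hp.pos 2
    have hr : (commutator G).relIndex N = 1 := by
      have : (commutator G).relIndex N * p ^ 2 = 1 * p ^ 2 := by rw [h1, one_mul]
      exact Nat.eq_of_mul_eq_mul_right hp2 this
    exact le_antisymm (relIndex_eq_one.mp hr) hle
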